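/- For every integer n, there exists a natural number K such that (T_R^*)^k(n) ≡ 1 (mod 3) for all k < K, and (T_R^*)^k(n) ≡ 0 or 2 (mod 3) for all k ≥ K. That is, every T_R^*-trajectory consists of finitely many numbers congruent to 1 (mod 3) followed only by numbers congruent to 0 or 2 (mod 3). -/
import Mathlib


/-- The accelerated refined map `T_R^*`. -/
def TRstar (n : ℤ) : ℤ :=
  if n % 2 = 1 then (3 * n + 1) / 2
  else if n % 4 = 0 then 3 * n / 4
  else if n % 8 = 6 then (3 * n - 2) / 8
  else if n % 16 = 2 then (3 * n - 6) / 16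
  else if n % 32 = 26 then (3 * n - 14) / 32
  else if n % 64 = 10 then (3 * n - 30) / 64
  else (n - 42) / 64

lemma TRstar_abs (n : ℤ) (h : n % 3 ≠ 1) : TRstar n % 3 ≠ 1 := by
  unfold TRstar
  split_ifs <;> omega

lemma TRstar_dec (n : ℤ) (h : n % 3 = 1) (h2 : TRstar n % 3 = 1) :
    (TRstar n).natAbs < n.natAbs := by
  unfold TRstar at *
  split_ifs at * <;> omega

lemma exists_not_one : ∀ N : ℕ, ∀ n : ℤ, n.natAbs ≤ N → ∃ k, TRstar^[k] n % 3 ≠ 1 := by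
  intro N
  induction N with
  | zero => intro n hn; exact ⟨0, by simp; omega⟩
  | succ N ih =>
    intro n hn
    by_cases h : n % 3 = 1
    · by_cases h2 : TRstar n % 3 = 1
      · have hd := TRstar_dec n h h2
        obtain ⟨k, hk⟩ := ih (TRstar n) (by omega)
        exact ⟨k + 1, by rwa [Function.iterate_succ_apply]⟩
      · exact ⟨1, by simpa using h2⟩
    · exact ⟨0, by simpa using h⟩

theorem stmt_13 (n : ℤ) :
    ∃ K : ℕ, (∀ k < K, TRstar^[k] n % 3 = 1) ∧
      (∀ k ≥ K, TRstar^[k] n % 3 = 0 ∨ TRstar^[k] n % 3 = 2) := by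
  have hex : ∃ k, TRstar^[k] n % 3 ≠ 1 := exists_not_one n.natAbs n le_rfl
  refine ⟨Nat.find hex, fun k hk => ?_, fun k hk => ?_⟩
  · have := Nat.find_min hex hk
    omega
  · have key : ∀ m, TRstar^[Nat.find hex + m] n % 3 ≠ 1 := by
      intro m
      induction m with
      | zero => simpa using Nat.find_spec hex
      | succ m ihm =>
        rw [← Nat.add_assoc, Function.iterate_succ_apply']
        exact TRstar_abs _ ihm
    have := key (k - Nat.find hex)
    rw [Nat.add_sub_cancel' hk] at this
    omega
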